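/- Let n ≥ 2, k ≥ 2, and let α₁,…,α_k be positive integers with α₁ + ⋯ + α_k = n. Then for every positive integer S there exist finite families 𝒮₁,…,𝒮_k, where 𝒮_i consists of S^{k−1} affine subspaces of ℝⁿ each of dimension α_i, such that the number of points x ∈ ℝⁿ at which some subspace from each family passes through x with the direction subspaces of the chosen subspaces spanning ℝⁿ is at least S^{k} = (|𝒮₁|·|𝒮₂|⋯|𝒮_k|)^{1/(k−1)}. -/

import Mathlib

/-- `P` is an affine subspace of `ℝⁿ` with direction the linear subspace `W`. -/
def IsAffineWithDir {n : ℕ} (P : Set (Fin n → ℝ)) (W : Submodule ℝ (Fin n → ℝ)) : Prop :=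
  ∃ p : Fin n → ℝ, P = {x | ∃ w ∈ W, x = p + w}

/-- `P` is an affine subspace of `ℝⁿ` of dimension `α`. -/
def IsAffineOfDim {n : ℕ} (α : ℕ) (P : Set (Fin n → ℝ)) : Prop :=
  ∃ W : Submodule ℝ (Fin n → ℝ), Module.finrank ℝ W = α ∧ IsAffineWithDir P W

/-- `x` is a joint of the families `𝒮 i` of affine subspaces: there exist members
`P i ∈ 𝒮 i`, each containing `x`, whose direction subspaces together span `ℝⁿ`. -/
def IsJointOfFlats {n k : ℕ} (𝒮 : Fin k → Finset (Set (Fin n → ℝ))) (x : Fin n → ℝ) :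
    Prop :=
  ∃ (P : Fin k → Set (Fin n → ℝ)) (W : Fin k → Submodule ℝ (Fin n → ℝ)),
    (∀ i, P i ∈ 𝒮 i) ∧ (∀ i, IsAffineWithDir (P i) (W i)) ∧ (∀ i, x ∈ P i) ∧
    (⨆ i, W i) = ⊤

/-- Lower-bound example for the joints problem for higher-dimensional flats: there are
families `𝒮₁,…,𝒮ₖ`, where `𝒮ᵢ` consists of `S^(k-1)` affine subspaces of `ℝⁿ` of
dimension `αᵢ`, forming at least `S^k = (∏ᵢ|𝒮ᵢ|)^(1/(k-1))` joints. -/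
theorem joints_flats_grid_example (n k : ℕ) (hn : 2 ≤ n) (hk : 2 ≤ k)
    (α : Fin k → ℕ) (hα : ∀ i, 0 < α i) (hsum : ∑ i, α i = n)
    (S : ℕ) (hS : 0 < S) :
    ∃ 𝒮 : Fin k → Finset (Set (Fin n → ℝ)),
      (∀ i, (𝒮 i).card = S ^ (k - 1)) ∧
      (∀ i, ∀ P ∈ 𝒮 i, IsAffineOfDim (α i) P) ∧
      ∃ J : Finset (Fin n → ℝ), S ^ k ≤ J.card ∧ ∀ x ∈ J, IsJointOfFlats 𝒮 x := by
  classical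
  -- a block structure on the coordinates
  obtain ⟨e⟩ : Nonempty (((j : Fin k) × Fin (α j)) ≃ Fin n) :=
    ⟨Fintype.equivOfCardEq (by simp [Fintype.card_sigma, hsum])⟩
  set b : Fin n → Fin k := fun m => (e.symm m).1 with hb
  have hfiber : ∀ j : Fin k, ∃ m : Fin n, b m = j := fun j =>
    ⟨e ⟨j, ⟨0, hα j⟩⟩, by simp [hb]⟩
  -- cardinality of the fibers of `b`
  have hcard : ∀ i, Fintype.card {m : Fin n // b m = i} = α i := by
    intro i
    have e1 : {m : Fin n // b m = i} ≃ {p : (j : Fin k) × Fin (α j) // p.1 = i} :=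
      (Equiv.subtypeEquiv e.symm (fun m => Iff.rfl))
    have e2 : {p : (j : Fin k) × Fin (α j) // p.1 = i} ≃ Fin (α i) :=
      { toFun := fun p => p.2 ▸ p.1.2
        invFun := fun x => ⟨⟨i, x⟩, rfl⟩
        left_inv := by rintro ⟨⟨j, x⟩, rfl⟩; rfl
        right_inv := fun x => rfl }
    simp [Fintype.card_congr (e1.trans e2)]
  -- the direction subspaces
  set sgl : Fin n → (Fin n → ℝ) := fun m => Pi.single m 1 with hsgl
  have hsgl_inj : Function.Injective sgl := by
    intro m m' h
    by_contra hne
    have := congrFun h m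
    simp [hsgl, Pi.single_apply, hne] at this
  set W : Fin k → Submodule ℝ (Fin n → ℝ) :=
    fun i => Submodule.span ℝ (sgl '' {m | b m = i}) with hW
  -- rank of the directions
  have hrank : ∀ i, Module.finrank ℝ (W i) = α i := by
    intro i
    have hli : LinearIndependent ℝ ((↑) : (sgl '' {m | b m = i}) → (Fin n → ℝ)) := by
      have h1 : LinearIndependent ℝ ((↑) : Set.range sgl → (Fin n → ℝ)) := by
        have : LinearIndependent ℝ ((↑) : Set.range (Pi.basisFun ℝ (Fin n)) → (Fin n → ℝ)) :=
          (Pi.basisFun ℝ (Fin n)).linearIndependent.linearIndepOn_id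
        have hfun : ⇑(Pi.basisFun ℝ (Fin n)) = sgl := by funext m; simp [hsgl]
        rwa [hfun] at this
      exact LinearIndepOn.mono (s := Set.range sgl) (v := id) h1 (Set.image_subset_range _ _)
    rw [hW, finrank_span_set_eq_card hli]
    rw [Set.toFinset_card]
    rw [Fintype.card_congr (Equiv.Set.image sgl {m | b m = i} hsgl_inj).symm]
    simpa [Fintype.card_subtype] using hcard i
  -- the directions span everything
  have hsup : (⨆ i, W i) = ⊤ := by
    rw [hW]
    rw [← Submodule.span_iUnion]
    have : (⋃ i, sgl '' {m | b m = i}) = Set.range sgl := by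
      rw [← Set.image_iUnion]
      have : (⋃ i, {m | b m = i}) = Set.univ := by
        ext m; simp
      rw [this, Set.image_univ]
    rw [this]
    have hfun : ⇑(Pi.basisFun ℝ (Fin n)) = sgl := by funext m; simp [hsgl]
    rw [← hfun, Module.Basis.span_eq]
  -- membership of "constant on the fiber" vectors
  have hmem : ∀ (i : Fin k) (r : ℝ), (fun m => if b m = i then r else 0) ∈ W i := by
    intro i r
    have hEq : (fun m => if b m = i then r else 0) =
        ∑ m ∈ Finset.univ.filter (fun m => b m = i), r • sgl m := by
      funext m'
      rw [Finset.sum_apply]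
      have : ∀ m ∈ Finset.univ.filter (fun m => b m = i),
          (r • sgl m) m' = if m' = m then r else 0 := by
        intro m _
        simp [hsgl, Pi.single_apply]
      rw [Finset.sum_congr rfl this, Finset.sum_ite_eq]
      simp
    rw [hEq]
    exact Submodule.sum_mem _ fun m hm => Submodule.smul_mem _ _
      (Submodule.subset_span ⟨m, by simpa using hm, rfl⟩)
  -- elements of `W i` vanish outside the fiber of `i`
  have hvan : ∀ (i : Fin k), ∀ w ∈ W i, ∀ m, b m ≠ i → w m = 0 := by
    intro i
    have hle : W i ≤
        { carrier := {x | ∀ m, b m ≠ i → x m = 0}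
          add_mem' := fun hx hy m hm => by
            simp only [Set.mem_setOf_eq] at *
            rw [Pi.add_apply, hx m hm, hy m hm, add_zero]
          zero_mem' := fun m _ => rfl
          smul_mem' := fun c x hx m hm => by
            simp only [Set.mem_setOf_eq] at *
            rw [Pi.smul_apply, hx m hm, smul_zero] } := by
      rw [hW]
      rw [Submodule.span_le]
      rintro _ ⟨m0, hm0, rfl⟩ m hm
      have : m ≠ m0 := by rintro rfl; exact hm hm0
      simp [hsgl, Pi.single_apply, this]
    exact fun w hw => hle hw
  -- the base points and flats
  set pt : (i : Fin k) → ({j : Fin k // j ≠ i} → Fin S) → (Fin n → ℝ) :=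
    fun i c m => if h : b m = i then 0 else ((c ⟨b m, h⟩ : ℕ) : ℝ) with hpt
  set F : (i : Fin k) → ({j : Fin k // j ≠ i} → Fin S) → Set (Fin n → ℝ) :=
    fun i c => {x | ∃ w ∈ W i, x = pt i c + w} with hF
  have hFinj : ∀ i, Function.Injective (F i) := by
    intro i c c' hcc
    have hself : pt i c ∈ F i c := ⟨0, Submodule.zero_mem _, by simp⟩
    rw [hcc] at hself
    obtain ⟨w, hw, hptw⟩ := hself
    funext j
    obtain ⟨m, hm⟩ := hfiber j.1
    have hmne : b m ≠ i := hm ▸ j.2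
    have h1 := congrFun hptw m
    rw [Pi.add_apply, hvan i w hw m hmne, add_zero] at h1
    simp only [hpt, dif_neg hmne] at h1
    have : ((c ⟨b m, hmne⟩ : ℕ) : ℝ) = ((c' ⟨b m, hmne⟩ : ℕ) : ℝ) := h1
    have hnat := Nat.cast_injective (R := ℝ) this
    have hfin : c ⟨b m, hmne⟩ = c' ⟨b m, hmne⟩ := Fin.val_injective hnat
    have hjm : (⟨b m, hmne⟩ : {j : Fin k // j ≠ i}) = j := Subtype.ext hm
    rwa [hjm] at hfin
  refine ⟨fun i => Finset.image (F i) Finset.univ, ?_, ?_, ?_⟩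
  · intro i
    rw [Finset.card_image_of_injective _ (hFinj i), Finset.card_univ,
      Fintype.card_fun, Fintype.card_fin]
    congr 1
    rw [Fintype.card_subtype_compl, Fintype.card_subtype_eq, Fintype.card_fin]
  · intro i P hP
    obtain ⟨c, _, rfl⟩ := Finset.mem_image.mp hP
    exact ⟨W i, hrank i, pt i c, rfl⟩
  · -- the joints
    refine ⟨Finset.image (fun t : Fin k → Fin S => fun m => ((t (b m) : ℕ) : ℝ))
      Finset.univ, ?_, ?_⟩
    · have hinj : Function.Injective
          (fun t : Fin k → Fin S => fun m => ((t (b m) : ℕ) : ℝ)) := by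
        intro t t' h
        funext j
        obtain ⟨m, hm⟩ := hfiber j
        have := congrFun h m
        simp only [hm] at this
        exact Fin.val_injective (Nat.cast_injective this)
      rw [Finset.card_image_of_injective _ hinj, Finset.card_univ,
        Fintype.card_fun, Fintype.card_fin, Fintype.card_fin]
    · intro x hx
      obtain ⟨t, _, rfl⟩ := Finset.mem_image.mp hx
      refine ⟨fun i => F i (fun j => t j.1), W, fun i => Finset.mem_image_of_mem _
        (Finset.mem_univ _), fun i => ⟨pt i (fun j => t j.1), rfl⟩, ?_, hsup⟩
      intro i
      refine ⟨fun m => if b m = i then ((t i : ℕ) : ℝ) else 0, hmem i _, ?_⟩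
      funext m
      by_cases h : b m = i
      · simp [hpt, h]
      · simp [hpt, h]
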